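/- Assume the SBP property Q + Qᵀ = V_fᵀ B V_f, Q 1 = 0, and t_Lᵀ1 = t_Rᵀ1 = 1. With e_L = (1,0)ᵀ, e_R = (0,1)ᵀ, define the 3(N+3)×3(N+3) three-element global matrices, with blocks ordered as (volume nodes of element k, face nodes of element k) for k = 1,2,3: S_h having diagonal element blocks [[S, (1/2)V_fᵀB],[-(1/2)BV_f, 0]] for each element, inter-element coupling blocks (1/2)e_R e_Lᵀ from the face nodes of element k to the face nodes of element k+1 and -(1/2)e_L e_Rᵀ from the face nodes of element k+1 to the face nodes of element k (k = 1,2), and zeros elsewhere; B_h having the single nonzero blocks -e_L e_Lᵀ on the face nodes of element 1 and e_R e_Rᵀ on the face nodes of element 3; and Q_h = S_h + (1/2)B_h. Then Q_h 1 = 0 and Q_h + Q_hᵀ = B_h. -/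

import Mathlib

open Matrix BigOperators

lemma aux_one_sum {α β : Type*} : ((fun _ => (1:ℝ)) : α ⊕ β → ℝ) = Sum.elim (fun _ => (1:ℝ)) (fun _ => (1:ℝ)) := by
  ext x; cases x <;> rfl

lemma aux_vecMulVec_transpose {m n : Type*} (x : m → ℝ) (y : n → ℝ) :
    (Matrix.vecMulVec x y)ᵀ = Matrix.vecMulVec y x := by
  ext i j; simp [Matrix.vecMulVec_apply, mul_comm]

lemma aux_fromColumns_neg {m n₁ n₂ : Type*} (A : Matrix m n₁ ℝ) (B : Matrix m n₂ ℝ) :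
    -(Matrix.fromCols A B) = Matrix.fromCols (-A) (-B) := by
  ext i j; rcases j with j | j <;> simp [Matrix.fromCols, Matrix.neg_apply]

lemma aux_fromRows_neg {m₁ m₂ n : Type*} (A : Matrix m₁ n ℝ) (B : Matrix m₂ n ℝ) :
    -(Matrix.fromRows A B) = Matrix.fromRows (-A) (-B) := by
  rw [Matrix.fromRows_neg]

/-- The three-element global decoupled operator `Q_h = S_h + (1/2) B_h` satisfies
`Q_h 1 = 0` and the SBP property `Q_h + Q_hᵀ = B_h`. -/
theorem three_element_global_sbp
    (N : ℕ) (w : Fin (N + 1) → ℝ)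
    (W Q : Matrix (Fin (N + 1)) (Fin (N + 1)) ℝ)
    (hW : W = Matrix.diagonal w)
    (Vf : Matrix (Fin 2) (Fin (N + 1)) ℝ)
    (B : Matrix (Fin 2) (Fin 2) ℝ)
    (hB : B = Matrix.diagonal ![(-1 : ℝ), 1])
    (hSBP : Q + Qᵀ = Vfᵀ * B * Vf)
    (hQ1 : Q *ᵥ (fun _ => (1 : ℝ)) = 0)
    (htL1 : ∑ j, Vf 0 j = 1) (htR1 : ∑ j, Vf 1 j = 1)
    (eL eR : Fin 2 → ℝ) (heL : eL = ![1, 0]) (heR : eR = ![0, 1])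
    (S : Matrix (Fin (N + 1)) (Fin (N + 1)) ℝ)
    (hS : S = Q - (1 / 2 : ℝ) • (Vfᵀ * B * Vf))
    -- single-element diagonal block and inter-element coupling blocks
    (Ablk Cpl CplT : Matrix (Fin (N + 1) ⊕ Fin 2) (Fin (N + 1) ⊕ Fin 2) ℝ)
    (hAblk : Ablk = Matrix.fromBlocks S ((1 / 2 : ℝ) • (Vfᵀ * B))
      (-((1 / 2 : ℝ) • (B * Vf))) 0)
    (hCpl : Cpl = Matrix.fromBlocks 0 0 0 ((1 / 2 : ℝ) • Matrix.vecMulVec eR eL))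
    (hCplT : CplT = Matrix.fromBlocks 0 0 0 (-((1 / 2 : ℝ) • Matrix.vecMulVec eL eR)))
    -- three-element global matrices
    (Sh Bh Qh : Matrix ((Fin (N + 1) ⊕ Fin 2) ⊕ ((Fin (N + 1) ⊕ Fin 2) ⊕ (Fin (N + 1) ⊕ Fin 2)))
                       ((Fin (N + 1) ⊕ Fin 2) ⊕ ((Fin (N + 1) ⊕ Fin 2) ⊕ (Fin (N + 1) ⊕ Fin 2))) ℝ)
    (hSh : Sh = Matrix.fromBlocks
      Ablk (Matrix.fromCols Cpl 0)
      (Matrix.fromRows CplT 0) (Matrix.fromBlocks Ablk Cpl CplT Ablk))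
    (hBh : Bh = Matrix.fromBlocks
      (Matrix.fromBlocks 0 0 0 (-(Matrix.vecMulVec eL eL))) 0
      0 (Matrix.fromBlocks 0 0 0 (Matrix.fromBlocks 0 0 0 (Matrix.vecMulVec eR eR))))
    (hQh : Qh = Sh + (1 / 2 : ℝ) • Bh) :
    Qh *ᵥ (fun _ => (1 : ℝ)) = 0 ∧ Qh + Qhᵀ = Bh := by
  have hBsymm : Bᵀ = B := by rw [hB]; exact Matrix.diagonal_transpose _
  have hXsymm : (Vfᵀ * B * Vf)ᵀ = Vfᵀ * B * Vf := by
    rw [Matrix.transpose_mul, Matrix.transpose_mul, Matrix.transpose_transpose, hBsymm,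
      Matrix.mul_assoc]
  have hQT : Qᵀ = Vfᵀ * B * Vf - Q := by rw [← hSBP]; abel
  have hST : Sᵀ = -S := by
    rw [hS, Matrix.transpose_sub, Matrix.transpose_smul, hXsymm, hQT]
    module
  -- vector computations
  have hone2 : ((fun _ => (1:ℝ)) : Fin 2 → ℝ) = ![1, 1] := by
    ext i; fin_cases i <;> rfl
  have hBv : B *ᵥ ![(1:ℝ), 1] = ![-1, 1] := by
    rw [hB]; ext i; fin_cases i <;>
      simp [Matrix.mulVec, dotProduct, Fin.sum_univ_two, Matrix.diagonal]
  have hVf1 : Vf *ᵥ (fun _ => (1:ℝ)) = ![1, 1] := by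
    ext i; fin_cases i <;>
      simp [Matrix.mulVec, dotProduct, htL1, htR1]
  have hS1 : S *ᵥ (fun _ => (1:ℝ)) = -((1/2:ℝ) • (Vfᵀ *ᵥ ![-1, 1])) := by
    rw [hS, Matrix.sub_mulVec, hQ1, Matrix.smul_mulVec, ← Matrix.mulVec_mulVec,
      ← Matrix.mulVec_mulVec, hVf1, hBv, zero_sub]
  have hVfB1 : ((1/2:ℝ) • (Vfᵀ * B)) *ᵥ (fun _ => (1:ℝ)) = (1/2:ℝ) • (Vfᵀ *ᵥ ![-1, 1]) := by
    rw [Matrix.smul_mulVec, ← Matrix.mulVec_mulVec, hone2, hBv]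
  have hBVf1 : (-((1/2:ℝ) • (B * Vf))) *ᵥ (fun _ => (1:ℝ)) = ![(1/2:ℝ), -(1/2)] := by
    rw [Matrix.neg_mulVec, Matrix.smul_mulVec, ← Matrix.mulVec_mulVec, hVf1, hBv]
    ext i; fin_cases i <;> norm_num
  have hAblk1 : Ablk *ᵥ (fun _ => (1:ℝ)) =
      Sum.elim (0 : Fin (N+1) → ℝ) ![(1/2:ℝ), -(1/2)] := by
    rw [hAblk, Matrix.fromBlocks_mulVec]
    have h1 : ((fun _ => (1:ℝ)) ∘ (Sum.inl : Fin (N+1) → Fin (N+1) ⊕ Fin 2)) = fun _ => 1 := rfl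
    have h2 : ((fun _ => (1:ℝ)) ∘ (Sum.inr : Fin 2 → Fin (N+1) ⊕ Fin 2)) = fun _ => 1 := rfl
    rw [h1, h2, hS1, hVfB1, hBVf1, Matrix.zero_mulVec, add_zero, neg_add_cancel]
  have hCpl1 : Cpl *ᵥ (fun _ => (1:ℝ)) =
      Sum.elim (0 : Fin (N+1) → ℝ) ![0, (1/2:ℝ)] := by
    rw [hCpl, Matrix.fromBlocks_mulVec]
    ext x
    rcases x with i | i
    · simp
    · fin_cases i <;>
        simp [Matrix.mulVec, dotProduct, Matrix.vecMulVec_apply, Fin.sum_univ_two,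
          heL, heR]
  have hCplT1 : CplT *ᵥ (fun _ => (1:ℝ)) =
      Sum.elim (0 : Fin (N+1) → ℝ) ![-(1/2:ℝ), 0] := by
    rw [hCplT, Matrix.fromBlocks_mulVec]
    ext x
    rcases x with i | i
    · simp
    · fin_cases i <;>
        simp [Matrix.mulVec, dotProduct, Matrix.vecMulVec_apply, Fin.sum_univ_two,
          heL, heR]
  have hsum2 : ((fun _ => (1:ℝ)) ∘ (Sum.inr :
      ((Fin (N+1) ⊕ Fin 2) ⊕ (Fin (N+1) ⊕ Fin 2)) →
      (Fin (N+1) ⊕ Fin 2) ⊕ ((Fin (N+1) ⊕ Fin 2) ⊕ (Fin (N+1) ⊕ Fin 2))))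
      = Sum.elim (fun _ => (1:ℝ)) (fun _ => (1:ℝ)) := by
    ext x; cases x <;> rfl
  have hSh1 : Sh *ᵥ (fun _ => (1:ℝ)) =
      Sum.elim (Sum.elim (0 : Fin (N+1) → ℝ) ![(1/2:ℝ), 0])
        (Sum.elim (Sum.elim (0 : Fin (N+1) → ℝ) (0 : Fin 2 → ℝ))
          (Sum.elim (0 : Fin (N+1) → ℝ) ![(0:ℝ), -(1/2)])) := by
    rw [hSh, Matrix.fromBlocks_mulVec]
    have h1 : ((fun _ => (1:ℝ)) ∘ (Sum.inl : (Fin (N+1) ⊕ Fin 2) →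
        (Fin (N+1) ⊕ Fin 2) ⊕ ((Fin (N+1) ⊕ Fin 2) ⊕ (Fin (N+1) ⊕ Fin 2)))) =
        ((fun _ => (1:ℝ)) : Fin (N+1) ⊕ Fin 2 → ℝ) := rfl
    rw [h1, hsum2, Matrix.fromCols_mulVec_sumElim, Matrix.zero_mulVec, add_zero,
      Matrix.fromRows_mulVec, Matrix.fromBlocks_mulVec, Matrix.zero_mulVec]
    have h2 : ((Sum.elim (fun _ => (1:ℝ)) (fun _ => (1:ℝ))) ∘
        (Sum.inl : (Fin (N+1) ⊕ Fin 2) → (Fin (N+1) ⊕ Fin 2) ⊕ (Fin (N+1) ⊕ Fin 2))) =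
        ((fun _ => (1:ℝ)) : Fin (N+1) ⊕ Fin 2 → ℝ) := rfl
    have h3 : ((Sum.elim (fun _ => (1:ℝ)) (fun _ => (1:ℝ))) ∘
        (Sum.inr : (Fin (N+1) ⊕ Fin 2) → (Fin (N+1) ⊕ Fin 2) ⊕ (Fin (N+1) ⊕ Fin 2))) =
        ((fun _ => (1:ℝ)) : Fin (N+1) ⊕ Fin 2 → ℝ) := rfl
    rw [h2, h3, hAblk1, hCpl1, hCplT1]
    ext x
    rcases x with (i | i) | ((i | i) | (i | i)) <;>
      simp <;> fin_cases i <;> norm_num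
  have hBh1 : Bh *ᵥ (fun _ => (1:ℝ)) =
      Sum.elim (Sum.elim (0 : Fin (N+1) → ℝ) ![(-1:ℝ), 0])
        (Sum.elim (Sum.elim (0 : Fin (N+1) → ℝ) (0 : Fin 2 → ℝ))
          (Sum.elim (0 : Fin (N+1) → ℝ) ![(0:ℝ), 1])) := by
    rw [hBh]
    ext x
    rcases x with (i | i) | ((i | i) | (i | i)) <;>
      simp [Matrix.mulVec, dotProduct, Fintype.sum_sum_type,
        Matrix.vecMulVec_apply, heL, heR, Fin.sum_univ_two] <;>
      fin_cases i <;> norm_num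
  constructor
  · rw [hQh, Matrix.add_mulVec, Matrix.smul_mulVec, hSh1, hBh1]
    ext x
    rcases x with (i | i) | ((i | i) | (i | i)) <;>
      simp <;> fin_cases i <;> norm_num
  · -- SBP
    have hAblkT : Ablkᵀ = -Ablk := by
      have e1 : (-((1/2:ℝ) • (B * Vf)))ᵀ = -((1/2:ℝ) • (Vfᵀ * B)) := by
        rw [Matrix.transpose_neg, Matrix.transpose_smul, Matrix.transpose_mul, hBsymm]
      have e2 : ((1/2:ℝ) • (Vfᵀ * B))ᵀ = -(-((1/2:ℝ) • (B * Vf))) := by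
        rw [Matrix.transpose_smul, Matrix.transpose_mul, Matrix.transpose_transpose, hBsymm,
          neg_neg]
      rw [hAblk, Matrix.fromBlocks_transpose, Matrix.fromBlocks_neg, hST, e1, e2,
        Matrix.transpose_zero, neg_zero]
    have hCplT' : Cplᵀ = -CplT := by
      rw [hCpl, hCplT, Matrix.fromBlocks_transpose, Matrix.fromBlocks_neg]
      simp only [Matrix.transpose_zero, neg_zero, neg_neg, Matrix.transpose_smul,
        aux_vecMulVec_transpose]
    have hCplTT : CplTᵀ = -Cpl := by
      rw [hCpl, hCplT, Matrix.fromBlocks_transpose, Matrix.fromBlocks_neg]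
      simp only [Matrix.transpose_zero, neg_zero, Matrix.transpose_neg, Matrix.transpose_smul,
        aux_vecMulVec_transpose]
    have hShT : Shᵀ = -Sh := by
      rw [hSh, Matrix.fromBlocks_transpose, Matrix.transpose_fromCols,
        Matrix.transpose_fromRows, Matrix.fromBlocks_transpose, hAblkT, hCplT', hCplTT,
        Matrix.transpose_zero]
      simp only [Matrix.fromBlocks_neg, aux_fromColumns_neg, aux_fromRows_neg, neg_zero]
    have hBhT : Bhᵀ = Bh := by
      rw [hBh]
      simp only [Matrix.fromBlocks_transpose, Matrix.transpose_zero, Matrix.transpose_neg,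
        aux_vecMulVec_transpose]
    rw [hQh, Matrix.transpose_add, Matrix.transpose_smul, hShT, hBhT]
    module
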